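/- If E is a compact connected subset of a metric space that is covered by finitely many open balls B(x₁,r₁), …, B(x_k,r_k), then the diameter of E is at most twice the sum of the radii: diam(E) ≤ 2(r₁ + ⋯ + r_k). -/

import Mathlib

open Metric Set MeasureTheory Filter Topology

noncomputable section

/-- Cross-ratio of a four-tuple of points in a metric space. -/
def crossRatio {Z : Type*} [MetricSpace Z] (z₁ z₂ z₃ z₄ : Z) : NNReal :=
  nndist z₁ z₃ * nndist z₂ z₄ / (nndist z₁ z₄ * nndist z₂ z₃)

/-- `f : X → Y` is `η`-quasi-Möbius. -/
def IsQuasiMobius {X Y : Type*} [MetricSpace X] [MetricSpace Y]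
    (η : NNReal ≃ₜ NNReal) (f : X → Y) : Prop :=
  Function.Injective f ∧
  ∀ x₁ x₂ x₃ x₄ : X, x₁ ≠ x₂ → x₁ ≠ x₃ → x₁ ≠ x₄ → x₂ ≠ x₃ → x₂ ≠ x₄ → x₃ ≠ x₄ →
    crossRatio (f x₁) (f x₂) (f x₃) (f x₄) ≤ η (crossRatio x₁ x₂ x₃ x₄)

/-- `f : X → Y` is `η`-quasi-symmetric. -/
def IsQuasiSymmetric {X Y : Type*} [MetricSpace X] [MetricSpace Y]
    (η : NNReal ≃ₜ NNReal) (f : X → Y) : Prop :=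
  Function.Injective f ∧
  ∀ x₁ x₂ x₃ : X, x₁ ≠ x₂ → x₁ ≠ x₃ → x₂ ≠ x₃ →
    nndist (f x₁) (f x₂) / nndist (f x₁) (f x₃) ≤ η (nndist x₁ x₂ / nndist x₁ x₃)

/-- Lebesgue covering dimension is at most `n`. -/
def covDimLE (X : Type*) [TopologicalSpace X] (n : ℕ) : Prop :=
  ∀ 𝒰 : Set (Set X), (∀ U ∈ 𝒰, IsOpen U) → ⋃₀ 𝒰 = univ →
    ∃ 𝒱 : Set (Set X), (∀ V ∈ 𝒱, IsOpen V) ∧ ⋃₀ 𝒱 = univ ∧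
      (∀ V ∈ 𝒱, ∃ U ∈ 𝒰, V ⊆ U) ∧
      ∀ x : X, {V ∈ 𝒱 | x ∈ V}.encard ≤ (n + 1 : ℕ)

/-- Lebesgue covering (topological) dimension. -/
noncomputable def topDim (X : Type*) [TopologicalSpace X] : ℕ∞ :=
  ⨅ (n : ℕ) (_ : covDimLE X n), (n : ℕ∞)

/-- Ahlfors `Q`-regularity. -/
def AhlforsRegular (Q : ℝ) (Z : Type*) [MetricSpace Z] [MeasurableSpace Z] [BorelSpace Z] :
    Prop :=
  0 < Q ∧ CompleteSpace Z ∧ 0 < Metric.diam (univ : Set Z) ∧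
  ∃ C : ℝ, 1 ≤ C ∧ ∀ (z : Z) (R : ℝ), 0 < R → R ≤ Metric.diam (univ : Set Z) →
    ENNReal.ofReal (R ^ Q / C) ≤ μH[Q] (Metric.ball z R) ∧
    μH[Q] (Metric.ball z R) ≤ ENNReal.ofReal (C * R ^ Q)

/-- The action of `G` on `Z` is by homeomorphisms, each `η`-quasi-Möbius. -/
def QMAction (η : NNReal ≃ₜ NNReal) (G Z : Type*) [Group G] [MulAction G Z]
    [MetricSpace Z] : Prop :=
  (∀ g : G, Continuous fun z : Z => g • z) ∧
  ∀ g : G, IsQuasiMobius η (fun z : Z => g • z)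

/-- Cocompactness of the induced action on distinct triples (for compact `Z`). -/
def TriplesCocompact (G Z : Type*) [Group G] [MulAction G Z] [MetricSpace Z] : Prop :=
  ∃ δ > (0:ℝ), ∀ z₁ z₂ z₃ : Z, z₁ ≠ z₂ → z₁ ≠ z₃ → z₂ ≠ z₃ →
    ∃ g : G, δ ≤ dist (g • z₁) (g • z₂) ∧ δ ≤ dist (g • z₁) (g • z₃) ∧
      δ ≤ dist (g • z₂) (g • z₃)

def IsStableValue {X Y : Type*} [TopologicalSpace X] [MetricSpace Y]
    (f : X → Y) (y : Y) : Prop :=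
  ∃ ε > (0:ℝ), ∀ g : X → Y, Continuous g → (∀ x, dist (f x) (g x) < ε) → y ∈ range g

def IsStableValueOn {X Y : Type*} [TopologicalSpace X] [MetricSpace Y]
    (f : X → Y) (s : Set X) (y : Y) : Prop :=
  IsStableValue (fun x : s => f x) y

def IsStablePoint {X Y : Type*} [TopologicalSpace X] [MetricSpace Y]
    (f : X → Y) (x : X) : Prop :=
  ∀ U ∈ nhds x, IsStableValueOn f U (f x)

/-- `f` is a regular map. -/
def IsRegularMap {X Y : Type*} [MetricSpace X] [MetricSpace Y] (f : X → Y) : Prop :=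
  (∃ L : NNReal, LipschitzWith L f) ∧
  ∃ N : ℕ, ∀ (y : Y) (r : ℝ), 0 < r → ∃ t : Finset X, t.card ≤ N ∧
    f ⁻¹' Metric.ball y r ⊆ ⋃ c ∈ t, Metric.ball c r

/-- A metric space is doubling. -/
def MetricDoubling (Y : Type*) [MetricSpace Y] : Prop :=
  ∃ M : ℕ, ∀ (y : Y) (R : ℝ), ∃ t : Finset Y, t.card ≤ M ∧
    Metric.ball y R ⊆ ⋃ c ∈ t, Metric.ball c (R / 2)

/-- A metric space is uniformly perfect. -/
def UniformlyPerfect (Z : Type*) [MetricSpace Z] : Prop :=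
  ∃ lam : ℝ, 1 ≤ lam ∧ ∀ (z : Z) (R : ℝ), 0 < R → R ≤ Metric.diam (univ : Set Z) →
    (Metric.closedBall z R \ Metric.ball z (R / lam)).Nonempty

/-- `(S, q)` is a weak tangent of `Z`: `S` is complete and some rescalings
`(λ_k Z, p_k)` converge to `(S, q)` in the pointed Gromov–Hausdorff sense. -/
def PointedWeakTangent (Z : Type*) [MetricSpace Z] (S : Type*) [MetricSpace S]
    (q : S) : Prop :=
  CompleteSpace S ∧
  ∃ (lam : ℕ → ℝ) (p : ℕ → Z), (∀ k, 0 < lam k) ∧ Tendsto lam atTop atTop ∧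
    ∀ R > (0:ℝ), ∀ ε > (0:ℝ), ∃ (N : ℕ) (M : Set S),
      q ∈ M ∧ M ⊆ Metric.ball q R ∧ (∀ s ∈ Metric.ball q R, ∃ m ∈ M, dist s m ≤ ε) ∧
      ∀ k ≥ N, ∃ (Mk : Set Z) (F : Z → S),
        p k ∈ Mk ∧ (∀ z ∈ Mk, lam k * dist z (p k) < R) ∧
        (∀ z : Z, lam k * dist z (p k) < R → ∃ w ∈ Mk, lam k * dist z w ≤ ε) ∧
        F (p k) = q ∧ Set.BijOn F Mk M ∧
        ∀ a ∈ Mk, ∀ b ∈ Mk, |lam k * dist a b - dist (F a) (F b)| < ε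

/-- If a compact connected set `E` in a metric space is covered by finitely many open
balls, then the diameter of `E` is at most twice the sum of the radii. -/
theorem diam_le_two_mul_sum_radii_of_cover {X : Type*} [MetricSpace X] (E : Set X)
    (hcomp : IsCompact E) (hconn : IsConnected E)
    (k : ℕ) (x : Fin k → X) (r : Fin k → ℝ) (hr : ∀ i, 0 < r i)
    (hcover : E ⊆ ⋃ i, Metric.ball (x i) (r i)) :
    Metric.diam E ≤ 2 * ∑ i, r i := by
  have hr' : ∀ i, (0:ℝ) ≤ r i := fun i => (hr i).le
  have hsum : (0:ℝ) ≤ ∑ i, r i := Finset.sum_nonneg fun i _ => hr' i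
  apply Metric.diam_le_of_forall_dist_le (by linarith)
  intro a ha b hb
  obtain ⟨i₀, hi₀⟩ := Set.mem_iUnion.1 (hcover ha)
  -- graph on indices: balls overlapping on E
  let G : SimpleGraph (Fin k) :=
    { Adj := fun i j => i ≠ j ∧
        (E ∩ Metric.ball (x i) (r i) ∩ Metric.ball (x j) (r j)).Nonempty
      symm := by
        constructor
        rintro i j ⟨hne, e, ⟨⟨he, hei⟩, hej⟩⟩
        exact ⟨hne.symm, e, ⟨⟨he, hej⟩, hei⟩⟩
      loopless := ⟨fun i h => h.1 rfl⟩ }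
  let I : Set (Fin k) := {j | G.Reachable i₀ j}
  -- b lies in a ball whose index is reachable from i₀
  have hbU : ∃ j ∈ I, b ∈ Metric.ball (x j) (r j) := by
    by_contra hcon
    push_neg at hcon
    set U : Set X := ⋃ i ∈ I, Metric.ball (x i) (r i) with hU
    set V : Set X := ⋃ i ∈ Iᶜ, Metric.ball (x i) (r i) with hV
    have hUV : E ⊆ U ∪ V := by
      intro e he
      obtain ⟨j, hj⟩ := Set.mem_iUnion.1 (hcover he)
      by_cases hjI : j ∈ I
      · exact Or.inl (Set.mem_biUnion hjI hj)
      · exact Or.inr (Set.mem_biUnion hjI hj)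
    have hi₀I : i₀ ∈ I := SimpleGraph.Reachable.refl i₀
    obtain ⟨jb, hjb⟩ := Set.mem_iUnion.1 (hcover hb)
    have hjbI : jb ∉ I := fun h => hcon jb h hjb
    have hne := hconn.isPreconnected U V
      (isOpen_biUnion fun _ _ => isOpen_ball)
      (isOpen_biUnion fun _ _ => isOpen_ball) hUV
      ⟨a, ha, Set.mem_biUnion hi₀I hi₀⟩
      ⟨b, hb, Set.mem_biUnion hjbI hjb⟩
    obtain ⟨e, heE, heU, heV⟩ := hne
    obtain ⟨i, hiI, hei⟩ := Set.mem_iUnion₂.1 heU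
    obtain ⟨j, hjI, hej⟩ := Set.mem_iUnion₂.1 heV
    have hadj : G.Adj i j := by
      refine ⟨?_, e, ⟨⟨heE, hei⟩, hej⟩⟩
      rintro rfl; exact hjI hiI
    exact hjI (hiI.trans hadj.reachable)
  obtain ⟨j, hjI, hbj⟩ := hbU
  obtain ⟨w⟩ := hjI
  have hball : ∀ (c : X) (R : ℝ) (p q : X), p ∈ Metric.ball c R → q ∈ Metric.ball c R →
      dist p q ≤ 2 * R := by
    intro c R p q hp hq
    have h1 := mem_ball.1 hp
    have h2 := mem_ball.1 hq
    have h3 : dist c q = dist q c := dist_comm c q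
    calc dist p q ≤ dist p c + dist c q := dist_triangle _ _ _
      _ ≤ 2 * R := by linarith
  -- bound distance along a walk
  have key : ∀ {i j : Fin k} (p : G.Walk i j) (a b : X),
      a ∈ Metric.ball (x i) (r i) → b ∈ Metric.ball (x j) (r j) →
      dist a b ≤ (p.support.map (fun v => 2 * r v)).sum := by
    intro i j p
    induction p with
    | nil =>
      rename_i u
      intro a b ha hb
      simp only [SimpleGraph.Walk.support_nil, List.map_cons, List.map_nil,
        List.sum_cons, List.sum_nil, add_zero]
      exact hball _ _ _ _ ha hb
    | @cons i i' j h q ih =>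
      intro a b ha hb
      obtain ⟨-, e, ⟨⟨-, hei⟩, hei'⟩⟩ := h
      have h1 : dist a e ≤ 2 * r i := hball _ _ _ _ ha hei
      have h2 := ih e b hei' hb
      simp only [SimpleGraph.Walk.support_cons, List.map_cons, List.sum_cons]
      calc dist a b ≤ dist a e + dist e b := dist_triangle _ _ _
        _ ≤ 2 * r i + (q.support.map (fun v => 2 * r v)).sum := by linarith
  have hdist := key w.bypass a b hi₀ hbj
  have hnodup : w.bypass.support.Nodup := w.bypass_isPath.support_nodup
  have hsum_eq : (w.bypass.support.map (fun v => 2 * r v)).sum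
      = ∑ v ∈ w.bypass.support.toFinset, 2 * r v := by
    rw [List.sum_toFinset _ hnodup]
  have hle : ∑ v ∈ w.bypass.support.toFinset, 2 * r v ≤ ∑ v, 2 * r v := by
    apply Finset.sum_le_sum_of_subset_of_nonneg (Finset.subset_univ _)
    intro i _ _
    linarith [hr' i]
  calc dist a b ≤ (w.bypass.support.map (fun v => 2 * r v)).sum := hdist
    _ = ∑ v ∈ w.bypass.support.toFinset, 2 * r v := hsum_eq
    _ ≤ ∑ v, 2 * r v := hle
    _ = 2 * ∑ i, r i := by rw [Finset.mul_sum]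
end
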